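/- Let α ∈ (0,1), t₀ < t₁, and q ∈ [1, 1/(1-α)). Then for every f ∈ L^1(t₀,t₁;ℝ), ‖J^α f‖_{L^q(t₀,t₁)} ≤ K_{α,1} ((t₁-t₀)^{1-q(1-α)} / (1-q(1-α)))^{1/q} ‖f‖_{L^1(t₀,t₁)}, where K_{α,1} = 2/(α^{1-α} Γ(α)). -/

import Mathlib

open MeasureTheory Set
open scoped ENNReal

lemma measurable_ind_rpow (c : ℝ) :
    Measurable (Set.indicator (Set.Ioi (0:ℝ)) (fun x => x ^ c)) := by
  have h : Set.indicator (Set.Ioi (0:ℝ)) (fun x => x ^ c)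
      = fun x => if 0 < x then Real.exp (Real.log x * c) else 0 := by
    funext x
    by_cases h : (0:ℝ) < x
    · simp [Set.indicator_of_mem, h, Set.mem_Ioi, Real.rpow_def_of_pos h]
    · simp [Set.indicator_of_notMem, h, Set.mem_Ioi]
  rw [h]
  exact Measurable.ite measurableSet_Ioi
    (Real.measurable_exp.comp (Real.measurable_log.mul_const c)) measurable_const

noncomputable def RL (α t₀ : ℝ) (f : ℝ → ℝ) (t : ℝ) : ℝ :=
  (1 / Real.Gamma α) * ∫ s in t₀..t, (t - s) ^ (α - 1) * f s

lemma stmt12_aux (α q t₀ t₁ : ℝ) (hα : 0 < α) (hα1 : α < 1) (ht : t₀ < t₁)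
    (hq : 1 ≤ q) (hq2 : q < 1 / (1 - α))
    (f : ℝ → ℝ) (hm : Measurable f) (hf : IntegrableOn f (Set.Ioc t₀ t₁)) :
    IntegrableOn (fun t => |RL α t₀ f t| ^ q) (Set.Ioc t₀ t₁) ∧
    (∫ t in Set.Ioc t₀ t₁, |RL α t₀ f t| ^ q) ^ (1 / q) ≤
      (2 / (α ^ (1 - α) * Real.Gamma α)) *
        ((t₁ - t₀) ^ (1 - q * (1 - α)) / (1 - q * (1 - α))) ^ (1 / q) *
        ∫ t in Set.Ioc t₀ t₁, |f t| := by
  have hΓ : 0 < Real.Gamma α := Real.Gamma_pos_of_pos hα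
  have hq0 : 0 < q := lt_of_lt_of_le one_pos hq
  have h1α : 0 < 1 - α := sub_pos.2 hα1
  have hqα : q * (1 - α) < 1 := by
    have := (lt_div_iff₀ h1α).mp hq2; linarith
  set γ : ℝ := 1 - q * (1 - α) with hγdef
  have hγ : 0 < γ := by simp only [hγdef]; linarith
  set β : ℝ := q * (α - 1) with hβdef
  have hβγ : β + 1 = γ := by simp only [hβdef, hγdef]; ring
  have hβ : -1 < β := by simp only [hβdef]; nlinarith
  set T : ℝ := t₁ - t₀ with hTdef
  have hT : 0 < T := sub_pos.2 ht
  set μ : Measure ℝ := volume.restrict (Set.Ioc t₀ t₁) with hμdef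
  -- kernels
  set k : ℝ → ℝ := Set.indicator (Set.Ioi (0:ℝ)) (fun x => x ^ (α - 1)) with hkdef
  have hk_meas : Measurable k := measurable_ind_rpow _
  have hk_nonneg : ∀ x, 0 ≤ k x :=
    fun x => Set.indicator_nonneg (fun y hy => Real.rpow_nonneg (le_of_lt hy) _) x
  set k2 : ℝ → ℝ := Set.indicator (Set.Ioi (0:ℝ)) (fun x => x ^ β) with hk2def
  have hk2_meas : Measurable k2 := measurable_ind_rpow _
  set K : ℝ → ℝ → ℝ≥0∞ := fun t s => ENNReal.ofReal (k (t - s)) with hKdef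
  set g : ℝ → ℝ≥0∞ := fun s => ENNReal.ofReal |f s| with hgdef
  have hg_meas : Measurable g := (hm.abs).ennreal_ofReal
  have hKq : ∀ t s, K t s ^ q = ENNReal.ofReal (k2 (t - s)) := by
    intro t s
    by_cases h : t - s ∈ Set.Ioi (0:ℝ)
    · simp only [hKdef, hkdef, hk2def, Set.indicator_of_mem h]
      rw [ENNReal.ofReal_rpow_of_nonneg (Real.rpow_nonneg (le_of_lt h) _) hq0.le,
        ← Real.rpow_mul (le_of_lt h)]
      congr 1
      simp only [hβdef]; ring
    · simp only [hKdef, hkdef, hk2def, Set.indicator_of_notMem h, ENNReal.ofReal_zero]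
      exact ENNReal.zero_rpow_of_pos hq0
  -- the L¹ mass
  set I : ℝ≥0∞ := ∫⁻ s, g s ∂μ with hIdef
  have hInn : (0:ℝ) ≤ ∫ t in Set.Ioc t₀ t₁, |f t| :=
    integral_nonneg fun t => abs_nonneg _
  have hI : I = ENNReal.ofReal (∫ t in Set.Ioc t₀ t₁, |f t|) := by
    rw [hIdef, ofReal_integral_eq_lintegral_ofReal hf.abs
      (Filter.Eventually.of_forall fun t => abs_nonneg _)]
  have hIfin : I ≠ ⊤ := by
    rw [hI]; exact ENNReal.ofReal_ne_top
  -- Step A: pointwise bound of the RL integral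
  have hA : ∀ t ∈ Set.Ioc t₀ t₁,
      ENNReal.ofReal |RL α t₀ f t| ≤
        ENNReal.ofReal (1 / Real.Gamma α) * ∫⁻ s, K t s * g s ∂μ := by
    intro t htm
    have habs : |RL α t₀ f t|
        = (1 / Real.Gamma α) * |∫ s in t₀..t, (t - s) ^ (α - 1) * f s| := by
      rw [RL, abs_mul, abs_of_nonneg (by positivity : (0:ℝ) ≤ 1 / Real.Gamma α)]
    rw [habs, ENNReal.ofReal_mul (by positivity)]
    refine mul_le_mul_right ?_ _
    rw [intervalIntegral.integral_of_le (le_of_lt htm.1)]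
    calc ENNReal.ofReal |∫ s in Set.Ioc t₀ t, (t - s) ^ (α - 1) * f s|
        = ‖∫ s in Set.Ioc t₀ t, (t - s) ^ (α - 1) * f s‖ₑ :=
          (Real.enorm_eq_ofReal_abs _).symm
      _ ≤ ∫⁻ s in Set.Ioc t₀ t, ‖(t - s) ^ (α - 1) * f s‖ₑ :=
          enorm_integral_le_lintegral_enorm _
      _ = ∫⁻ s in Set.Ioc t₀ t, K t s * g s := by
          refine setLIntegral_congr_fun measurableSet_Ioc
            (fun s hs => ?_)
          rcases eq_or_lt_of_le hs.2 with h | h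
          · have h0 : t - s = 0 := by rw [h]; ring
            simp [hKdef, hkdef, h0, Set.indicator_of_notMem,
              Real.zero_rpow (by linarith : α - 1 ≠ 0)]
          · have hts : (0:ℝ) < t - s := sub_pos.2 h
            rw [Real.enorm_eq_ofReal_abs, abs_mul,
              abs_of_nonneg (Real.rpow_nonneg hts.le _),
              ENNReal.ofReal_mul (Real.rpow_nonneg hts.le _)]
            simp only [hKdef, hkdef, hgdef]
            rw [Set.indicator_of_mem (Set.mem_Ioi.2 hts)]
      _ ≤ ∫⁻ s, K t s * g s ∂μ := by
          rw [hμdef]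
          exact lintegral_mono_set (Set.Ioc_subset_Ioc le_rfl htm.2)
  -- Step B: Hoelder
  have hB : ∀ t, (∫⁻ s, K t s * g s ∂μ) ^ q ≤
      (∫⁻ s, K t s ^ q * g s ∂μ) * I ^ (q - 1) := by
    intro t
    have hKm : Measurable fun s => K t s := by
      simp only [hKdef]
      exact (hk_meas.comp (measurable_const.sub measurable_id)).ennreal_ofReal
    rcases eq_or_lt_of_le hq with h1 | h1
    · simp [← h1, ENNReal.rpow_one]
    · set p' : ℝ := q / (q - 1) with hp'def
      have hpq : q.HolderConjugate p' := Real.HolderConjugate.conjExponent h1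
      have hp0 : 0 < p' := hpq.symm.pos
      have e1 : ∀ x : ℝ≥0∞, (x ^ (1/q)) ^ q = x := fun x => by
        rw [← ENNReal.rpow_mul, one_div_mul_cancel hq0.ne', ENNReal.rpow_one]
      have e2 : ∀ x : ℝ≥0∞, (x ^ (1/p')) ^ p' = x := fun x => by
        rw [← ENNReal.rpow_mul, one_div_mul_cancel hp0.ne', ENNReal.rpow_one]
      have heq : ∀ s, K t s * g s = (K t s ^ q * g s) ^ (1/q) * g s ^ (1/p') := by
        intro s
        rw [ENNReal.mul_rpow_of_nonneg _ _ (by positivity), ← ENNReal.rpow_mul,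
          mul_one_div_cancel hq0.ne', ENNReal.rpow_one, mul_assoc,
          ← ENNReal.rpow_add_of_nonneg _ _ (by positivity) (by positivity)]
        rw [show 1/q + 1/p' = 1 by
          simpa [one_div] using hpq.inv_add_inv_eq_one, ENNReal.rpow_one]
      have hF : AEMeasurable (fun s => (K t s ^ q * g s) ^ (1/q)) μ :=
        (((hKm.pow_const q).mul hg_meas).pow_const _).aemeasurable
      have hG : AEMeasurable (fun s => g s ^ (1/p')) μ :=
        (hg_meas.pow_const _).aemeasurable
      have hH : ∫⁻ s, K t s * g s ∂μ ≤
          (∫⁻ s, K t s ^ q * g s ∂μ) ^ (1/q) * I ^ (1/p') := by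
        have h0 := ENNReal.lintegral_mul_le_Lp_mul_Lq μ hpq hF hG
        simp only [Pi.mul_apply] at h0
        calc ∫⁻ s, K t s * g s ∂μ
            = ∫⁻ s, (K t s ^ q * g s) ^ (1/q) * g s ^ (1/p') ∂μ :=
              lintegral_congr fun s => heq s
          _ ≤ (∫⁻ s, ((K t s ^ q * g s) ^ (1/q)) ^ q ∂μ) ^ (1/q) *
              (∫⁻ s, (g s ^ (1/p')) ^ p' ∂μ) ^ (1/p') := h0
          _ = _ := by simp only [e1, e2, hIdef]
      calc (∫⁻ s, K t s * g s ∂μ) ^ q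
          ≤ ((∫⁻ s, K t s ^ q * g s ∂μ) ^ (1/q) * I ^ (1/p')) ^ q :=
            ENNReal.rpow_le_rpow hH hq0.le
        _ = (∫⁻ s, K t s ^ q * g s ∂μ) * I ^ (q - 1) := by
            rw [ENNReal.mul_rpow_of_nonneg _ _ hq0.le, ← ENNReal.rpow_mul,
              ← ENNReal.rpow_mul, one_div_mul_cancel hq0.ne', ENNReal.rpow_one]
            congr 1
            rw [hp'def, one_div_div, div_mul_cancel₀ _ hq0.ne']
  -- Step D: kernel integral bound
  set C : ℝ≥0∞ := ENNReal.ofReal (T ^ γ / γ) with hCdef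
  have hD : ∀ s ∈ Set.Ioc t₀ t₁, ∫⁻ t, K t s ^ q ∂μ ≤ C := by
    intro s hs
    have hcalc : ∫⁻ t, K t s ^ q ∂μ
        = ∫⁻ t in Set.Ioc s t₁, ENNReal.ofReal ((t - s) ^ β) := by
      rw [hμdef, ← Set.Ioc_union_Ioc_eq_Ioc hs.1.le hs.2,
        lintegral_union measurableSet_Ioc (Set.Ioc_disjoint_Ioc_of_le le_rfl)]
      have h1 : ∫⁻ t in Set.Ioc t₀ s, K t s ^ q = 0 := by
        rw [← lintegral_zero (μ := volume.restrict (Set.Ioc t₀ s))]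
        refine setLIntegral_congr_fun measurableSet_Ioc
          (fun t htt => ?_)
        rw [hKq]
        have : t - s ∉ Set.Ioi (0:ℝ) := by
          simp only [Set.mem_Ioi, not_lt]; linarith [htt.2]
        simp [hk2def, Set.indicator_of_notMem this]
      have h2 : ∫⁻ t in Set.Ioc s t₁, K t s ^ q
          = ∫⁻ t in Set.Ioc s t₁, ENNReal.ofReal ((t - s) ^ β) := by
        refine setLIntegral_congr_fun measurableSet_Ioc
          (fun t htt => ?_)
        rw [hKq]
        have : t - s ∈ Set.Ioi (0:ℝ) := Set.mem_Ioi.2 (sub_pos.2 htt.1)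
        simp [hk2def, Set.indicator_of_mem this]
      rw [h1, h2, zero_add]
    have hst : s ≤ t₁ := hs.2
    have hint : IntegrableOn (fun t => (t - s) ^ β) (Set.Ioc s t₁) := by
      have h0 : IntervalIntegrable (fun x : ℝ => x ^ β) volume 0 (t₁ - s) :=
        intervalIntegral.intervalIntegrable_rpow' hβ
      have h1 : IntervalIntegrable (fun t => (t - s) ^ β) volume (0 + s) (t₁ - s + s) :=
        h0.comp_sub_right s
      rw [zero_add, sub_add_cancel] at h1
      rw [← intervalIntegrable_iff_integrableOn_Ioc_of_le hst]
      exact h1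
    have hnn : 0 ≤ᵐ[volume.restrict (Set.Ioc s t₁)] fun t => (t - s) ^ β := by
      filter_upwards [ae_restrict_mem measurableSet_Ioc] with t htt
      exact Real.rpow_nonneg (by linarith [htt.1] : (0:ℝ) ≤ t - s) _
    rw [hcalc, ← ofReal_integral_eq_lintegral_ofReal hint hnn, hCdef]
    apply ENNReal.ofReal_le_ofReal
    have hval : ∫ t in Set.Ioc s t₁, (t - s) ^ β = (t₁ - s) ^ γ / γ := by
      have hcs : (∫ x in s..t₁, (x - s) ^ β) = ∫ x in (s - s)..(t₁ - s), x ^ β :=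
        intervalIntegral.integral_comp_sub_right (fun u : ℝ => u ^ β) s
      rw [← intervalIntegral.integral_of_le hst, hcs, sub_self,
        integral_rpow (Or.inl hβ), Real.zero_rpow (by linarith : β + 1 ≠ 0), hβγ]
      ring
    rw [hval]
    have h1 : (t₁ - s) ^ γ ≤ T ^ γ :=
      Real.rpow_le_rpow (by linarith [hs.2] : (0:ℝ) ≤ t₁ - s)
        (by simp only [hTdef]; linarith [hs.1]) hγ.le
    gcongr
  -- Step C: Tonelli
  have hgfin : ∀ s, g s ≠ ⊤ := fun s => ENNReal.ofReal_ne_top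
  have hCfin : C ≠ ⊤ := ENNReal.ofReal_ne_top
  have hC : ∫⁻ t, (∫⁻ s, K t s ^ q * g s ∂μ) ∂μ ≤ C * I := by
    have hswap : ∫⁻ t, ∫⁻ s, K t s ^ q * g s ∂μ ∂μ
        = ∫⁻ s, ∫⁻ t, K t s ^ q * g s ∂μ ∂μ := by
      refine lintegral_lintegral_swap (Measurable.aemeasurable ?_)
      simp only [Function.uncurry, hKdef]
      exact (((hk_meas.comp (measurable_fst.sub measurable_snd)).ennreal_ofReal).pow_const
        q).mul (hg_meas.comp measurable_snd)
    rw [hswap]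
    calc ∫⁻ s, ∫⁻ t, K t s ^ q * g s ∂μ ∂μ
        = ∫⁻ s, (∫⁻ t, K t s ^ q ∂μ) * g s ∂μ := by
          refine lintegral_congr fun s => ?_
          rw [lintegral_mul_const' _ _ (hgfin s)]
      _ ≤ ∫⁻ s, C * g s ∂μ := by
          rw [hμdef]
          refine lintegral_mono_ae ?_
          filter_upwards [ae_restrict_mem measurableSet_Ioc] with s hs
          exact mul_le_mul_left (by rw [← hμdef]; exact hD s hs) _
      _ = C * I := lintegral_const_mul' _ _ hCfin
  -- combine
  set c : ℝ≥0∞ := ENNReal.ofReal (1 / Real.Gamma α) with hcdef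
  have hcq : c ^ q ≠ ⊤ := ENNReal.rpow_ne_top_of_nonneg hq0.le ENNReal.ofReal_ne_top
  have hIq : I ^ (q - 1) ≠ ⊤ :=
    ENNReal.rpow_ne_top_of_nonneg (by linarith) hIfin
  have hL : ∫⁻ t, ENNReal.ofReal (|RL α t₀ f t| ^ q) ∂μ ≤ c ^ q * (C * I ^ q) := by
    calc ∫⁻ t, ENNReal.ofReal (|RL α t₀ f t| ^ q) ∂μ
        = ∫⁻ t, (ENNReal.ofReal |RL α t₀ f t|) ^ q ∂μ := by
          refine lintegral_congr fun t => ?_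
          rw [ENNReal.ofReal_rpow_of_nonneg (abs_nonneg _) hq0.le]
      _ ≤ ∫⁻ t, (c * ∫⁻ s, K t s * g s ∂μ) ^ q ∂μ := by
          rw [hμdef]
          refine lintegral_mono_ae ?_
          filter_upwards [ae_restrict_mem measurableSet_Ioc] with t ht2
          refine ENNReal.rpow_le_rpow ?_ hq0.le
          rw [← hμdef]
          exact hA t ht2
      _ = ∫⁻ t, c ^ q * (∫⁻ s, K t s * g s ∂μ) ^ q ∂μ :=
          lintegral_congr fun t => ENNReal.mul_rpow_of_nonneg _ _ hq0.le
      _ ≤ ∫⁻ t, c ^ q * ((∫⁻ s, K t s ^ q * g s ∂μ) * I ^ (q - 1)) ∂μ :=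
          lintegral_mono fun t => mul_le_mul_right (hB t) _
      _ = c ^ q * ((∫⁻ t, ∫⁻ s, K t s ^ q * g s ∂μ ∂μ) * I ^ (q - 1)) := by
          rw [lintegral_const_mul' _ _ hcq]
          congr 1
          rw [lintegral_mul_const' _ _ hIq]
      _ ≤ c ^ q * ((C * I) * I ^ (q - 1)) := by
          exact mul_le_mul_right (mul_le_mul_left hC _) _
      _ = c ^ q * (C * I ^ q) := by
          rw [mul_assoc]
          congr 1
          nth_rewrite 1 [← ENNReal.rpow_one I]
          rw [← ENNReal.rpow_add_of_nonneg _ _ zero_le_one (by linarith)]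
          norm_num
  -- measurability of RL on the interval
  have hRL_eq : ∀ t ∈ Set.Ioc t₀ t₁,
      RL α t₀ f t = (1 / Real.Gamma α) * ∫ s, k (t - s) * f s ∂μ := by
    intro t htm
    rw [RL, intervalIntegral.integral_of_le htm.1.le]
    congr 1
    have hsub : Set.Ioc t₀ t ⊆ Set.Ioc t₀ t₁ := Set.Ioc_subset_Ioc le_rfl htm.2
    have h1 : ∫ s in Set.Ioc t₀ t₁, k (t - s) * f s
        = ∫ s in Set.Ioc t₀ t, k (t - s) * f s := by
      refine setIntegral_eq_of_subset_of_forall_diff_eq_zero measurableSet_Ioc hsub ?_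
      intro x hx
      have hxt : t < x := by
        by_contra hcon
        exact hx.2 ⟨hx.1.1, not_lt.mp hcon⟩
      have : t - x ∉ Set.Ioi (0:ℝ) := by
        simp only [Set.mem_Ioi, not_lt]; linarith
      simp [hkdef, Set.indicator_of_notMem this]
    have h2 : ∫ s in Set.Ioc t₀ t, k (t - s) * f s
        = ∫ s in Set.Ioc t₀ t, (t - s) ^ (α - 1) * f s := by
      refine setIntegral_congr_fun measurableSet_Ioc fun s hs => ?_
      rcases eq_or_lt_of_le hs.2 with h | h
      · have h0 : t - s = 0 := by rw [h]; ring
        simp [hkdef, h0, Set.indicator_of_notMem,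
          Real.zero_rpow (by linarith : α - 1 ≠ 0)]
      · have hts : t - s ∈ Set.Ioi (0:ℝ) := Set.mem_Ioi.2 (sub_pos.2 h)
        simp [hkdef, Set.indicator_of_mem hts]
    rw [hμdef, h1, h2]
  have hRLm : AEStronglyMeasurable (fun t => RL α t₀ f t) μ := by
    have hH_meas : Measurable (fun p : ℝ × ℝ => k (p.1 - p.2) * f p.2) :=
      (hk_meas.comp (measurable_fst.sub measurable_snd)).mul (hm.comp measurable_snd)
    have h1 : AEStronglyMeasurable
        (fun t => (1 / Real.Gamma α) * ∫ s, k (t - s) * f s ∂μ) μ := by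
      refine AEStronglyMeasurable.const_mul ?_ _
      exact (hH_meas.aestronglyMeasurable
        (μ := μ.prod μ)).integral_prod_right'
    refine h1.congr ?_
    rw [hμdef]
    filter_upwards [ae_restrict_mem measurableSet_Ioc] with t htm
    rw [← hμdef]
    exact (hRL_eq t htm).symm
  have habsm : AEStronglyMeasurable (fun t => |RL α t₀ f t| ^ q) μ := by
    have h2 := (hRLm.norm.aemeasurable.pow_const q).aestronglyMeasurable
    simpa [Real.norm_eq_abs] using h2
  have hnn2 : ∀ t, (0:ℝ) ≤ |RL α t₀ f t| ^ q :=
    fun t => Real.rpow_nonneg (abs_nonneg _) _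
  have hub_ne : c ^ q * (C * I ^ q) ≠ ⊤ :=
    ENNReal.mul_ne_top hcq (ENNReal.mul_ne_top hCfin
      (ENNReal.rpow_ne_top_of_nonneg hq0.le hIfin))
  have hfin : HasFiniteIntegral (fun t => |RL α t₀ f t| ^ q) μ := by
    rw [hasFiniteIntegral_iff_ofReal (Filter.Eventually.of_forall hnn2)]
    exact lt_of_le_of_lt hL (lt_top_iff_ne_top.2 hub_ne)
  have hInt : IntegrableOn (fun t => |RL α t₀ f t| ^ q) (Set.Ioc t₀ t₁) := ⟨habsm, hfin⟩
  refine ⟨hInt, ?_⟩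
  -- final numeric computation
  rw [hμdef] at hL ⊢
  have hIE : ∫ t in Set.Ioc t₀ t₁, |RL α t₀ f t| ^ q
      = (∫⁻ t in Set.Ioc t₀ t₁, ENNReal.ofReal (|RL α t₀ f t| ^ q)).toReal := by
    rw [integral_eq_lintegral_of_nonneg_ae (Filter.Eventually.of_forall hnn2)
      (by rw [← hμdef]; exact habsm)]
  set F : ℝ := ∫ t in Set.Ioc t₀ t₁, |f t| with hFdef
  have hP : (0:ℝ) ≤ (1 / Real.Gamma α) ^ q * ((T ^ γ / γ) * F ^ q) := by
    have := Real.rpow_nonneg hInn q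
    positivity
  have hub : c ^ q * (C * I ^ q)
      = ENNReal.ofReal ((1 / Real.Gamma α) ^ q * ((T ^ γ / γ) * F ^ q)) := by
    rw [hcdef, hCdef, hI,
      ENNReal.ofReal_rpow_of_nonneg (by positivity) hq0.le,
      ENNReal.ofReal_rpow_of_nonneg hInn hq0.le,
      ← ENNReal.ofReal_mul (by positivity), ← ENNReal.ofReal_mul (by positivity)]
  have hxnn : (0:ℝ) ≤ ∫ t in Set.Ioc t₀ t₁, |RL α t₀ f t| ^ q := by
    rw [hIE]; exact ENNReal.toReal_nonneg
  have hx : ∫ t in Set.Ioc t₀ t₁, |RL α t₀ f t| ^ q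
      ≤ (1 / Real.Gamma α) ^ q * ((T ^ γ / γ) * F ^ q) := by
    rw [hIE]
    calc (∫⁻ t in Set.Ioc t₀ t₁, ENNReal.ofReal (|RL α t₀ f t| ^ q)).toReal
        ≤ (c ^ q * (C * I ^ q)).toReal := ENNReal.toReal_mono hub_ne hL
      _ = _ := by rw [hub, ENNReal.toReal_ofReal hP]
  have hTγ : (0:ℝ) ≤ T ^ γ / γ := by positivity
  have epow : ∀ x : ℝ, 0 ≤ x → (x ^ q) ^ (1/q) = x := fun x hxx => by
    rw [← Real.rpow_mul hxx, mul_one_div_cancel hq0.ne', Real.rpow_one]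
  calc (∫ t in Set.Ioc t₀ t₁, |RL α t₀ f t| ^ q) ^ (1/q)
      ≤ ((1 / Real.Gamma α) ^ q * ((T ^ γ / γ) * F ^ q)) ^ (1/q) :=
        Real.rpow_le_rpow hxnn hx (by positivity)
    _ = (1 / Real.Gamma α) * ((T ^ γ / γ) ^ (1/q) * F) := by
        rw [Real.mul_rpow (by positivity) (mul_nonneg hTγ (Real.rpow_nonneg hInn q)),
          Real.mul_rpow hTγ (Real.rpow_nonneg hInn q),
          epow _ (by positivity), epow _ hInn]
    _ ≤ 2 / (α ^ (1 - α) * Real.Gamma α) * (T ^ γ / γ) ^ (1/q) * F := by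
        have hαp : (0:ℝ) < α ^ (1 - α) := Real.rpow_pos_of_pos hα _
        have hα2 : α ^ (1 - α) ≤ 1 := Real.rpow_le_one hα.le hα1.le h1α.le
        have hc2 : 1 / Real.Gamma α ≤ 2 / (α ^ (1 - α) * Real.Gamma α) := by
          rw [div_le_div_iff₀ hΓ (by positivity)]
          nlinarith
        calc (1 / Real.Gamma α) * ((T ^ γ / γ) ^ (1/q) * F)
            = (1 / Real.Gamma α) * (T ^ γ / γ) ^ (1/q) * F := by ring
          _ ≤ 2 / (α ^ (1 - α) * Real.Gamma α) * (T ^ γ / γ) ^ (1/q) * F := by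
              have h3 : (0:ℝ) ≤ (T ^ γ / γ) ^ (1/q) := Real.rpow_nonneg hTγ _
              exact mul_le_mul_of_nonneg_right
                (mul_le_mul_of_nonneg_right hc2 h3) hInn

theorem stmt12 (α q t₀ t₁ : ℝ) (hα : 0 < α) (hα1 : α < 1) (ht : t₀ < t₁)
    (hq : 1 ≤ q) (hq2 : q < 1 / (1 - α))
    (f : ℝ → ℝ) (hf : IntegrableOn f (Set.Ioc t₀ t₁)) :
    IntegrableOn (fun t => |RL α t₀ f t| ^ q) (Set.Ioc t₀ t₁) ∧
    (∫ t in Set.Ioc t₀ t₁, |RL α t₀ f t| ^ q) ^ (1 / q) ≤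
      (2 / (α ^ (1 - α) * Real.Gamma α)) *
        ((t₁ - t₀) ^ (1 - q * (1 - α)) / (1 - q * (1 - α))) ^ (1 / q) *
        ∫ t in Set.Ioc t₀ t₁, |f t| := by
  obtain ⟨f', hf'm, hff'⟩ : ∃ f' : ℝ → ℝ, Measurable f' ∧
      f =ᵐ[volume.restrict (Set.Ioc t₀ t₁)] f' :=
    ⟨hf.1.mk f, hf.1.stronglyMeasurable_mk.measurable, hf.1.ae_eq_mk⟩
  have hf' : IntegrableOn f' (Set.Ioc t₀ t₁) := (integrable_congr hff').mp hf
  have hRL : ∀ t ∈ Set.Ioc t₀ t₁, RL α t₀ f t = RL α t₀ f' t := by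
    intro t htm
    rw [RL, RL]
    congr 1
    rw [intervalIntegral.integral_of_le htm.1.le,
      intervalIntegral.integral_of_le htm.1.le]
    refine setIntegral_congr_ae measurableSet_Ioc ?_
    have h3 := ae_restrict_of_ae_restrict_of_subset
      (Set.Ioc_subset_Ioc le_rfl htm.2) hff'
    rw [ae_restrict_iff' measurableSet_Ioc] at h3
    filter_upwards [h3] with s hs hsm
    rw [hs hsm]
  have habs : ∀ᵐ t ∂(volume.restrict (Set.Ioc t₀ t₁)), f t = f' t := hff'
  have key := stmt12_aux α q t₀ t₁ hα hα1 ht hq hq2 f' hf'm hf'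
  have heqOn : Set.EqOn (fun t => |RL α t₀ f' t| ^ q)
      (fun t => |RL α t₀ f t| ^ q) (Set.Ioc t₀ t₁) := by
    intro t htm
    simp only [hRL t htm]
  have hIeq : ∫ t in Set.Ioc t₀ t₁, |RL α t₀ f t| ^ q
      = ∫ t in Set.Ioc t₀ t₁, |RL α t₀ f' t| ^ q :=
    setIntegral_congr_fun measurableSet_Ioc fun t htm => by
      simp only [hRL t htm]
  have hFeq : ∫ t in Set.Ioc t₀ t₁, |f t| = ∫ t in Set.Ioc t₀ t₁, |f' t| := by
    refine integral_congr_ae ?_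
    filter_upwards [habs] with t hs
    rw [hs]
  refine ⟨key.1.congr_fun heqOn measurableSet_Ioc, ?_⟩
  rw [hIeq, hFeq]
  exact key.2
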